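/- Fix a natural number d ≥ 1 and let (h_n) be a sequence of natural numbers with h_n / ln n → 0 as n → ∞. For each n, sample the random graph of the model G(n, d) and fix the node v = 0 ∈ Fin n. Then the probability that the out-neighborhood of v up to distance h_n is a tree — i.e., that there do not exist two distinct directed paths of length at most h_n starting at v and ending at the same node — tends to 1 as n → ∞. -/

import Mathlib

open MeasureTheory

instance (n : ℕ) : MeasurableSpace (Finset (Fin n)) := ⊤

/-- The uniform probability measure on a finite set `s`. -/
noncomputable def uniformFinset {α : Type*} [MeasurableSpace α] (s : Finset α) :
    Measure α :=
  (s.card : ENNReal)⁻¹ • ∑ x ∈ s, Measure.dirac x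

/-- The law of the random graph of the model `G(n,d)`: independently for each
node of `Fin n`, its set of successors is a uniformly random `d`-element subset
of `Fin n`. -/
noncomputable def graphMeasure (n d : ℕ) : Measure (Fin n → Finset (Fin n)) :=
  Measure.pi fun _ : Fin n => uniformFinset (Finset.powersetCard d Finset.univ)

/-- The out-neighborhood of `v` up to distance `h` is a tree: there do not exist
two distinct directed paths of length at most `h` starting at `v` and ending at
the same node. Equivalently, any two directed paths of length at most `h` from
`v` with the same endpoint coincide (same length and same sequence of nodes). -/
def TreeUpTo {V : Type*} (E : V → V → Prop) (v : V) (h : ℕ) : Prop :=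
  ∀ (k₁ k₂ : ℕ) (w₁ w₂ : ℕ → V), k₁ ≤ h → k₂ ≤ h →
    w₁ 0 = v → w₂ 0 = v →
    (∀ j < k₁, E (w₁ j) (w₁ (j + 1))) → (∀ j < k₂, E (w₂ j) (w₂ (j + 1))) →
    w₁ k₁ = w₂ k₂ → (k₁ = k₂ ∧ ∀ j ≤ k₁, w₁ j = w₂ j)

section Auxiliary

open Filter

instance (n : ℕ) : MeasurableSingletonClass (Finset (Fin n)) :=
  ⟨fun _ => MeasurableSpace.measurableSet_top⟩

lemma measurableSet_all {N : ℕ} (s : Set (Fin N → Finset (Fin N))) : MeasurableSet s :=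
  s.toFinite.measurableSet

lemma uniformFinset_apply {α : Type*} [MeasurableSpace α] (s : Finset α) (t : Set α)
    (ht : MeasurableSet t) [DecidablePred (· ∈ t)] :
    uniformFinset s t = ((s.filter (· ∈ t)).card : ENNReal) / s.card := by
  simp only [uniformFinset, Measure.smul_apply, smul_eq_mul,
    Measure.finset_sum_apply]
  rw [Finset.sum_congr rfl (fun x _ => Measure.dirac_apply' x ht)]
  have : ∑ x ∈ s, t.indicator (1 : α → ENNReal) x
      = ((s.filter (· ∈ t)).card : ENNReal) := by
    rw [Finset.sum_indicator_eq_sum_filter]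
    simp [Finset.filter_congr_decidable]
  rw [this, ENNReal.div_eq_inv_mul]

lemma uniformFinset_univ {α : Type*} [MeasurableSpace α] (s : Finset α) (hs : s.Nonempty) :
    uniformFinset s Set.univ = 1 := by
  classical
  rw [uniformFinset_apply s Set.univ MeasurableSet.univ]
  simp only [Set.mem_univ, Finset.filter_true]
  rw [ENNReal.div_self]
  · simpa using hs.card_pos.ne'
  · simp

lemma uniformFinset_le_one {α : Type*} [MeasurableSpace α] (s : Finset α) (t : Set α) :
    uniformFinset s t ≤ 1 := by
  refine le_trans (measure_mono (Set.subset_univ t)) ?_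
  rcases s.eq_empty_or_nonempty with rfl | hs
  · simp [uniformFinset]
  · rw [uniformFinset_univ s hs]

lemma natB {q d N : ℕ} (hq : q ≤ d) (hd : d ≤ N) :
    d.choose q * N ^ q ≤ d ^ q * N.choose q := by
  have key : d.descFactorial q * N ^ q ≤ d ^ q * N.descFactorial q := by
    rw [Nat.descFactorial_eq_prod_range, Nat.descFactorial_eq_prod_range]
    have e1 : (∏ i ∈ Finset.range q, (d - i)) * N ^ q
        = ∏ i ∈ Finset.range q, ((d - i) * N) := by
      rw [Finset.prod_mul_distrib, Finset.prod_const, Finset.card_range]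
    have e2 : d ^ q * ∏ i ∈ Finset.range q, (N - i)
        = ∏ i ∈ Finset.range q, (d * (N - i)) := by
      rw [Finset.prod_mul_distrib, Finset.prod_const, Finset.card_range]
    rw [e1, e2]
    apply Finset.prod_le_prod'
    intro i hi
    rw [Finset.mem_range] at hi
    have hid : i ≤ d := le_of_lt (lt_of_lt_of_le hi hq)
    have hiN : i ≤ N := hid.trans hd
    zify [hid, hiN]
    nlinarith [mul_le_mul_of_nonneg_left (by exact_mod_cast hd : (d:ℤ) ≤ N)
      (by positivity : (0:ℤ) ≤ (i:ℤ))]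
  rw [Nat.descFactorial_eq_factorial_mul_choose, Nat.descFactorial_eq_factorial_mul_choose] at key
  have key2 : q.factorial * (d.choose q * N ^ q) ≤ q.factorial * (d ^ q * N.choose q) := by
    calc q.factorial * (d.choose q * N ^ q) = q.factorial * d.choose q * N ^ q := by ring
      _ ≤ d ^ q * (q.factorial * N.choose q) := key
      _ = q.factorial * (d ^ q * N.choose q) := by ring
  exact Nat.le_of_mul_le_mul_left key2 q.factorial_pos

lemma natC {q d N : ℕ} (hq : q ≤ d) (hd : d ≤ N) :
    (N - q).choose (d - q) * N ^ q ≤ d ^ q * N.choose d := by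
  have hkey := Nat.choose_mul (n := N) hq
  have hpos : 0 < N.choose q := Nat.choose_pos (hq.trans hd)
  apply Nat.le_of_mul_le_mul_right _ hpos
  calc (N - q).choose (d - q) * N ^ q * N.choose q
      = N.choose q * (N - q).choose (d - q) * N ^ q := by ring
    _ = N.choose d * d.choose q * N ^ q := by rw [← hkey]
    _ = N.choose d * (d.choose q * N ^ q) := by ring
    _ ≤ N.choose d * (d ^ q * N.choose q) := Nat.mul_le_mul_left _ (natB hq hd)
    _ = d ^ q * N.choose d * N.choose q := by ring

lemma uniform_superset_le {N d : ℕ} (hd : d ≤ N) (Q : Finset (Fin N)) :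
    uniformFinset (Finset.powersetCard d (Finset.univ : Finset (Fin N))) {A | Q ⊆ A}
      ≤ ((d : ENNReal) / N) ^ Q.card := by
  classical
  by_cases hq0 : Q.card = 0
  · rw [hq0, pow_zero]; exact uniformFinset_le_one _ _
  have hN : 0 < N := by
    rcases Finset.card_pos.mp (Nat.pos_of_ne_zero hq0) with ⟨x, -⟩
    exact x.pos
  rw [uniformFinset_apply _ _ MeasurableSpace.measurableSet_top]
  set F := (Finset.powersetCard d (Finset.univ : Finset (Fin N))).filter
    (· ∈ {A : Finset (Fin N) | Q ⊆ A}) with hF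
  have hCard : (Finset.powersetCard d (Finset.univ : Finset (Fin N))).card = N.choose d := by
    rw [Finset.card_powersetCard, Finset.card_univ, Fintype.card_fin]
  rw [hCard]
  by_cases hqd : Q.card ≤ d
  · -- count F
    have hFcard : F.card ≤ (N - Q.card).choose (d - Q.card) := by
      have hmaps : ∀ A ∈ F, A \ Q ∈
          Finset.powersetCard (d - Q.card) (Finset.univ \ Q) := by
        intro A hA
        rw [hF, Finset.mem_filter, Finset.mem_powersetCard] at hA
        obtain ⟨⟨-, hcard⟩, hQA⟩ := hA
        rw [Finset.mem_powersetCard]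
        exact ⟨Finset.sdiff_subset_sdiff (Finset.subset_univ A) le_rfl,
          by rw [Finset.card_sdiff_of_subset hQA, hcard]⟩
      have hinj : Set.InjOn (fun A => A \ Q) F := by
        intro A hA B hB hAB
        rw [hF, Finset.mem_coe, Finset.mem_filter] at hA hB
        have hQA : Q ⊆ A := hA.2
        have hQB : Q ⊆ B := hB.2
        simp only at hAB
        rw [← Finset.sdiff_union_of_subset hQA, ← Finset.sdiff_union_of_subset hQB, hAB]
      have := Finset.card_le_card_of_injOn _ hmaps hinj
      rwa [Finset.card_powersetCard, Finset.card_sdiff_of_subset (Finset.subset_univ Q),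
        Finset.card_univ, Fintype.card_fin] at this
    have keyN : F.card * N ^ Q.card ≤ d ^ Q.card * N.choose d :=
      le_trans (Nat.mul_le_mul_right _ hFcard) (natC hqd hd)
    have key : (F.card : ENNReal) * (N : ENNReal) ^ Q.card
        ≤ (d : ENNReal) ^ Q.card * (N.choose d : ℕ) := by exact_mod_cast keyN
    have hC0 : ((N.choose d : ℕ) : ENNReal) ≠ 0 := by
      exact_mod_cast (Nat.choose_pos hd).ne'
    have hCt : ((N.choose d : ℕ) : ENNReal) ≠ ⊤ := ENNReal.natCast_ne_top _
    rw [ENNReal.div_le_iff hC0 hCt]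
    have hrw : ((d : ENNReal) / N) ^ Q.card * ((N.choose d : ℕ) : ENNReal)
        = (d : ENNReal) ^ Q.card * ((N.choose d : ℕ) : ENNReal) / (N : ENNReal) ^ Q.card := by
      rw [div_eq_mul_inv, mul_pow, ← ENNReal.inv_pow, div_eq_mul_inv]; ring
    rw [hrw, ENNReal.le_div_iff_mul_le
      (Or.inl (pow_ne_zero _ (by exact_mod_cast hN.ne')))
      (Or.inl (ENNReal.pow_ne_top (ENNReal.natCast_ne_top N)))]
    exact key
  · have : F = ∅ := by
      rw [hF, Finset.filter_eq_empty_iff]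
      intro A hA
      rw [Finset.mem_powersetCard] at hA
      intro hQA
      exact hqd (hA.2 ▸ Finset.card_le_card hQA)
    rw [this]
    simp


instance {α : Type*} [MeasurableSpace α] (s : Finset α) :
    IsFiniteMeasure (uniformFinset s) := by
  constructor
  rcases s.eq_empty_or_nonempty with rfl | hs
  · simp [uniformFinset]
  · rw [uniformFinset_univ s hs]; exact ENNReal.one_lt_top

lemma graphMeasure_edges_le {N d : ℕ} (hd : d ≤ N) (P : Finset (Fin N × Fin N)) :
    graphMeasure N d {g | ∀ p ∈ P, p.2 ∈ g p.1} ≤ ((d : ENNReal) / N) ^ P.card := by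
  classical
  set Q : Fin N → Finset (Fin N) :=
    fun u => (P.filter (fun p => p.1 = u)).image Prod.snd with hQ
  have hset : {g : Fin N → Finset (Fin N) | ∀ p ∈ P, p.2 ∈ g p.1}
      = Set.pi Set.univ (fun u => {A | Q u ⊆ A}) := by
    ext g
    simp only [Set.mem_setOf_eq, Set.mem_pi, Set.mem_univ, forall_true_left]
    constructor
    · intro hg u x hx
      simp only [hQ, Finset.mem_image, Finset.mem_filter] at hx
      obtain ⟨p, ⟨hp, hp1⟩, rfl⟩ := hx
      subst hp1
      exact hg p hp
    · intro hg p hp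
      apply hg p.1
      simp only [hQ, Finset.mem_image, Finset.mem_filter]
      exact ⟨p, ⟨hp, rfl⟩, rfl⟩
  rw [graphMeasure, hset, Measure.pi_pi]
  have hcardsum : ∑ u, (Q u).card = P.card := by
    have h1 : ∀ u, (Q u).card = (P.filter (fun p => p.1 = u)).card := by
      intro u
      apply Finset.card_image_of_injOn
      intro p hp p' hp' hpp
      rw [Finset.mem_coe, Finset.mem_filter] at hp hp'
      exact Prod.ext (hp.2.trans hp'.2.symm) hpp
    rw [Finset.sum_congr rfl (fun u _ => h1 u)]
    exact (Finset.card_eq_sum_card_fiberwise (fun p _ => Finset.mem_univ p.1)).symm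
  calc ∏ u, uniformFinset (Finset.powersetCard d Finset.univ) {A | Q u ⊆ A}
      ≤ ∏ u, ((d : ENNReal) / N) ^ (Q u).card :=
        Finset.prod_le_prod' (fun u _ => uniform_superset_le hd (Q u))
    _ = ((d : ENNReal) / N) ^ (∑ u, (Q u).card) := by
        rw [Finset.prod_pow_eq_pow_sum]
    _ = _ := by rw [hcardsum]

lemma measure_pathpair_le {N d : ℕ} (hd : d ≤ N) (k1 k2 t : ℕ) (ht2 : t ≤ k2)
    (w1 w2 : ℕ → Fin N)
    (G2 : ∀ i j, i < k1 → j < k1 → w1 i = w1 j → i = j)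
    (G3 : ∀ i j, t ≤ i → i < k2 → t ≤ j → j < k2 → w2 i = w2 j → i = j)
    (G4 : ∀ i j, i < k1 → t ≤ j → j < k2 → w1 i = w2 j → i = t ∧ j = t)
    (G5 : t < k1 → t < k2 → w1 (t + 1) ≠ w2 (t + 1)) :
    graphMeasure N d {g | (∀ j < k1, w1 (j + 1) ∈ g (w1 j)) ∧
        (∀ j < k2, w2 (j + 1) ∈ g (w2 j))}
      ≤ ((d : ENNReal) / N) ^ (k1 + (k2 - t)) := by
  classical
  set P : Finset (Fin N × Fin N) :=
    (Finset.range k1).image (fun i => (w1 i, w1 (i + 1))) ∪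
      (Finset.range k2).image (fun j => (w2 j, w2 (j + 1))) with hP
  have hsub : {g : Fin N → Finset (Fin N) | (∀ j < k1, w1 (j + 1) ∈ g (w1 j)) ∧
      (∀ j < k2, w2 (j + 1) ∈ g (w2 j))} ⊆ {g | ∀ p ∈ P, p.2 ∈ g p.1} := by
    intro g hg p hp
    rw [hP, Finset.mem_union] at hp
    rcases hp with hp | hp <;>
    · rw [Finset.mem_image] at hp
      obtain ⟨i, hi, rfl⟩ := hp
      rw [Finset.mem_range] at hi
      first
        | exact hg.1 i hi
        | exact hg.2 i hi
  have hcard : k1 + (k2 - t) ≤ P.card := by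
    have := Finset.card_le_card_of_injOn
      (fun i => if i < k1 then (w1 i, w1 (i + 1)) else
        (w2 (i - k1 + t), w2 (i - k1 + t + 1)))
      (s := Finset.range (k1 + (k2 - t))) (t := P) ?_ ?_
    · simpa using this
    · intro i hi
      rw [Finset.mem_coe, Finset.mem_range] at hi
      by_cases h : i < k1
      · simp only [h, if_true, hP, Finset.mem_coe, Finset.mem_union]
        exact Or.inl (Finset.mem_image.mpr ⟨i, Finset.mem_range.mpr h, rfl⟩)
      · simp only [h, if_false, hP, Finset.mem_coe, Finset.mem_union]
        refine Or.inr (Finset.mem_image.mpr ⟨i - k1 + t, Finset.mem_range.mpr ?_, rfl⟩)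
        omega
    · intro i hi j hj hij
      rw [Finset.coe_range, Set.mem_Iio] at hi hj
      simp only at hij
      by_cases h1 : i < k1 <;> by_cases h2 : j < k1
      · rw [if_pos h1, if_pos h2, Prod.mk.injEq] at hij
        exact G2 i j h1 h2 hij.1
      · rw [if_pos h1, if_neg h2, Prod.mk.injEq] at hij
        exfalso
        have hjj : t ≤ j - k1 + t ∧ j - k1 + t < k2 := by omega
        have := G4 i (j - k1 + t) h1 hjj.1 hjj.2 hij.1
        have ht1 : t < k1 := by omega
        have ht2' : t < k2 := by omega
        obtain ⟨hit, hjt⟩ := this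
        have hij2 := hij.2
        have hrw : j - k1 + t + 1 = t + 1 := by omega
        rw [hrw, hit] at hij2
        exact G5 ht1 ht2' hij2
      · rw [if_neg h1, if_pos h2, Prod.mk.injEq] at hij
        exfalso
        have hii : t ≤ i - k1 + t ∧ i - k1 + t < k2 := by omega
        have := G4 j (i - k1 + t) h2 hii.1 hii.2 hij.1.symm
        have ht1 : t < k1 := by omega
        have ht2' : t < k2 := by omega
        obtain ⟨hjt, hit⟩ := this
        have hij2 := hij.2.symm
        have hrw : i - k1 + t + 1 = t + 1 := by omega
        rw [hrw, hjt] at hij2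
        exact G5 ht1 ht2' hij2
      · rw [if_neg h1, if_neg h2, Prod.mk.injEq] at hij
        have : i - k1 + t = j - k1 + t :=
          G3 _ _ (by omega) (by omega) (by omega) (by omega) hij.1
        omega
  refine le_trans (measure_mono hsub) (le_trans (graphMeasure_edges_le hd P) ?_)
  have hbase : (d : ENNReal) / N ≤ 1 := by
    apply ENNReal.div_le_of_le_mul
    rw [one_mul]
    exact_mod_cast hd
  exact pow_le_pow_of_le_one zero_le hbase hcard

def IsWit {V : Type*} (E : V → V → Prop) (v : V) (h : ℕ)
    (k1 k2 : ℕ) (w1 w2 : ℕ → V) : Prop :=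
  k1 ≤ h ∧ k2 ≤ h ∧ w1 0 = v ∧ w2 0 = v ∧
    (∀ j < k1, E (w1 j) (w1 (j + 1))) ∧ (∀ j < k2, E (w2 j) (w2 (j + 1))) ∧
    w1 k1 = w2 k2 ∧ ¬(k1 = k2 ∧ ∀ j ≤ k1, w1 j = w2 j)

/-- A lasso witness: a path from `v` all of whose vertices before the end are
distinct and which returns to an earlier vertex. -/
def IsLasso {V : Type*} (E : V → V → Prop) (v : V) (h : ℕ) : Prop :=
  ∃ (k t : ℕ) (w : ℕ → V), k ≤ h ∧ t < k ∧ w 0 = v ∧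
    (∀ j < k, E (w j) (w (j + 1))) ∧ w k = w t ∧
    (∀ i j, i < k → j < k → w i = w j → i = j)

def IsTheta {V : Type*} (E : V → V → Prop) (v : V) (h : ℕ) : Prop :=
  ∃ (k1 k2 t : ℕ) (w1 w2 : ℕ → V), k1 ≤ h ∧ k2 ≤ h ∧ t < k1 ∧ t < k2 ∧
    w1 0 = v ∧
    (∀ j < k1, E (w1 j) (w1 (j + 1))) ∧ (∀ j < k2, E (w2 j) (w2 (j + 1))) ∧
    (∀ j ≤ t, w1 j = w2 j) ∧ w1 k1 = w2 k2 ∧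
    (∀ i j, i < k1 → j < k1 → w1 i = w1 j → i = j) ∧
    (∀ i j, i < k2 → j < k2 → w2 i = w2 j → i = j) ∧
    (∀ i j, i < k1 → t ≤ j → j < k2 → w1 i = w2 j → i = t ∧ j = t) ∧
    w1 (t + 1) ≠ w2 (t + 1)

lemma not_treeUpTo_iff {V : Type*} (E : V → V → Prop) (v : V) (h : ℕ) :
    ¬ TreeUpTo E v h ↔ ∃ k1 k2 w1 w2, IsWit E v h k1 k2 w1 w2 := by
  constructor
  · intro hnt
    by_contra hc
    push_neg at hc
    apply hnt
    intro k1 k2 w1 w2 h1 h2 h3 h4 h5 h6 h7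
    by_contra hno
    exact hc k1 k2 w1 w2 ⟨h1, h2, h3, h4, h5, h6, h7, hno⟩
  · rintro ⟨k1, k2, w1, w2, h1, h2, h3, h4, h5, h6, h7, h8⟩ htree
    exact h8 (htree k1 k2 w1 w2 h1 h2 h3 h4 h5 h6 h7)

lemma wit_to_structure {V : Type*} (E : V → V → Prop) (v : V) (h : ℕ)
    (hbad : ∃ k1 k2 w1 w2, IsWit E v h k1 k2 w1 w2) :
    IsLasso E v h ∨ IsTheta E v h := by
  classical
  -- pick a witness of minimal total length
  have hex : ∃ m, ∃ k1 k2 w1 w2, IsWit E v h k1 k2 w1 w2 ∧ k1 + k2 = m := by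
    obtain ⟨k1, k2, w1, w2, hw⟩ := hbad
    exact ⟨k1 + k2, k1, k2, w1, w2, hw, rfl⟩
  obtain ⟨k1, k2, w1, w2, hw, hsum⟩ := Nat.find_spec hex
  have hmin : ∀ k1' k2' (w1' w2' : ℕ → V), IsWit E v h k1' k2' w1' w2' →
      k1 + k2 ≤ k1' + k2' := by
    intro k1' k2' w1' w2' hw'
    rw [hsum]
    exact Nat.find_le ⟨k1', k2', w1', w2', hw', rfl⟩
  obtain ⟨hk1, hk2, hv1, hv2, hp1, hp2, hend, hdist⟩ := hw
  -- injectivity of each path on indices `< k`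
  have inj : ∀ (k k' : ℕ) (w w' : ℕ → V), IsWit E v h k k' w w' →
      (∀ a b (x y : ℕ → V), IsWit E v h a b x y → k + k' ≤ a + b) →
      ∀ i j, i < j → j < k → w i ≠ w j := by
    intro k k' w w' hw hmin i j hij hjk heq
    obtain ⟨ha1, ha2, ha3, ha4, ha5, ha6, ha7, ha8⟩ := hw
    -- shortcut path
    set w'' : ℕ → V := fun l => if l ≤ i then w l else w (l + (j - i)) with hw''
    have hlen : k - (j - i) + (j - i) = k := by omega
    have hw''le : ∀ l, l ≤ i → w'' l = w l := by
      intro l hl; simp only [hw'']; rw [if_pos hl]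
    have hw''gt : ∀ l, i < l → w'' l = w (l + (j - i)) := by
      intro l hl; simp only [hw'']; rw [if_neg (by omega)]
    have hw''path : ∀ l < k - (j - i), E (w'' l) (w'' (l + 1)) := by
      intro l hl
      rcases Nat.lt_or_ge l i with hli | hli
      · rw [hw''le l (by omega), hw''le (l + 1) (by omega)]
        exact ha5 l (by omega)
      rcases Nat.eq_or_lt_of_le hli with hli' | hli'
      · rw [hw''le l (by omega), hw''gt (l + 1) (by omega), ← hli', heq]
        have h2 : i + 1 + (j - i) = j + 1 := by omega
        rw [h2]
        exact ha5 j (by omega)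
      · rw [hw''gt l hli', hw''gt (l + 1) (by omega)]
        have h2 : l + 1 + (j - i) = l + (j - i) + 1 := by omega
        rw [h2]
        exact ha5 (l + (j - i)) (by omega)
    have hw''0 : w'' 0 = v := by
      simp only [hw'']
      rw [if_pos (Nat.zero_le i)]
      exact ha3
    have hw''end : w'' (k - (j - i)) = w k := by
      simp only [hw'']
      rw [if_neg (by omega : ¬ k - (j - i) ≤ i)]
      have h3 : k - (j - i) + (j - i) = k := by omega
      rw [h3]
    by_cases hdeg : k - (j - i) = k' ∧ ∀ l ≤ k - (j - i), w'' l = w' l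
    · -- degenerate: use the loop itself as witness
      have hwit : IsWit E v h i j w w := by
        refine ⟨by omega, by omega, ha3, ha3, ?_, ?_, heq, ?_⟩
        · intro l hl; exact ha5 l (by omega)
        · intro l hl; exact ha5 l (by omega)
        · rintro ⟨rfl, -⟩; exact absurd rfl hij.ne
      have := hmin i j w w hwit
      omega
    · have hwit : IsWit E v h (k - (j - i)) k' w'' w' := by
        refine ⟨by omega, ha2, hw''0, ha4, hw''path, ha6, ?_, hdeg⟩
        rw [hw''end]
        exact ha7
      have := hmin _ _ _ _ hwit
      omega
  have hwit0 : IsWit E v h k1 k2 w1 w2 :=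
    ⟨hk1, hk2, hv1, hv2, hp1, hp2, hend, hdist⟩
  have hwit0' : IsWit E v h k2 k1 w2 w1 := by
    refine ⟨hk2, hk1, hv2, hv1, hp2, hp1, hend.symm, ?_⟩
    rintro ⟨rfl, hall⟩
    exact hdist ⟨rfl, fun j hj => (hall j hj).symm⟩
  have hmin' : ∀ a b (x y : ℕ → V), IsWit E v h a b x y → k2 + k1 ≤ a + b := by
    intro a b x y hxy
    have := hmin a b x y hxy
    omega
  have inj1 : ∀ i j, i < k1 → j < k1 → w1 i = w1 j → i = j := by
    intro i j hi hj heq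
    rcases lt_trichotomy i j with hlt | rfl | hlt
    · exact absurd heq (inj k1 k2 w1 w2 hwit0 hmin i j hlt hj)
    · rfl
    · exact absurd heq.symm (inj k1 k2 w1 w2 hwit0 hmin j i hlt hi)
  have inj2 : ∀ i j, i < k2 → j < k2 → w2 i = w2 j → i = j := by
    intro i j hi hj heq
    rcases lt_trichotomy i j with hlt | rfl | hlt
    · exact absurd heq (inj k2 k1 w2 w1 hwit0' hmin' i j hlt hj)
    · rfl
    · exact absurd heq.symm (inj k2 k1 w2 w1 hwit0' hmin' j i hlt hi)
  -- the longest common prefix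
  set t := Nat.findGreatest (fun s => ∀ l ≤ s, w1 l = w2 l) (min k1 k2) with hT
  have hP0 : ∀ l ≤ 0, w1 l = w2 l := by
    intro l hl
    interval_cases l
    rw [hv1, hv2]
  have hpre : ∀ l ≤ t, w1 l = w2 l :=
    Nat.findGreatest_spec (P := fun s => ∀ l ≤ s, w1 l = w2 l) (Nat.zero_le _) hP0
  have htle : t ≤ min k1 k2 := Nat.findGreatest_le _
  have hmax : ∀ s, s ≤ min k1 k2 → (∀ l ≤ s, w1 l = w2 l) → s ≤ t := by
    intro s hs hP
    exact Nat.le_findGreatest (P := fun s => ∀ l ≤ s, w1 l = w2 l) hs hP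
  by_cases ht1 : t = k1
  · -- w2 is a lasso
    left
    have hne : k1 ≠ k2 := by
      rintro rfl
      exact hdist ⟨rfl, fun j hj => hpre j (by omega)⟩
    have hk1k2 : k1 < k2 := by omega
    refine ⟨k2, t, w2, hk2, by omega, hv2, hp2, ?_, inj2⟩
    calc w2 k2 = w1 k1 := hend.symm
      _ = w1 t := by rw [ht1]
      _ = w2 t := hpre t le_rfl
  by_cases ht2 : t = k2
  · left
    have hne : k1 ≠ k2 := by
      rintro rfl
      exact hdist ⟨rfl, fun j hj => hpre j (by omega)⟩
    have hk2k1 : k2 < k1 := by omega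
    refine ⟨k1, t, w1, hk1, by omega, hv1, hp1, ?_, inj1⟩
    calc w1 k1 = w2 k2 := hend
      _ = w2 t := by rw [ht2]
      _ = w1 t := (hpre t le_rfl).symm
  -- theta case
  right
  have htk1 : t < k1 := by omega
  have htk2 : t < k2 := by omega
  have hcross : ∀ i j, i < k1 → t ≤ j → j < k2 → w1 i = w2 j → i = t ∧ j = t := by
    intro i j hi htj hj heq
    by_cases hdeg : i = j ∧ ∀ l ≤ i, w1 l = w2 l
    · obtain ⟨rfl, hall⟩ := hdeg
      have : i ≤ t := hmax i (by omega) hall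
      omega
    · have hwit : IsWit E v h i j w1 w2 := by
        refine ⟨by omega, by omega, hv1, hv2, ?_, ?_, heq, hdeg⟩
        · intro l hl; exact hp1 l (by omega)
        · intro l hl; exact hp2 l (by omega)
      have := hmin i j w1 w2 hwit
      omega
  have hstep : w1 (t + 1) ≠ w2 (t + 1) := by
    intro heq
    have : t + 1 ≤ t := by
      apply hmax (t + 1) (by omega)
      intro l hl
      rcases Nat.lt_or_ge l (t + 1) with hl' | hl'
      · exact hpre l (by omega)
      · have : l = t + 1 := by omega
        rw [this, heq]
    omega
  exact ⟨k1, k2, t, w1, w2, hk1, hk2, htk1, htk2, hv1, hp1, hp2, hpre, hend,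
    inj1, inj2, hcross, hstep⟩

/-- Reconstruction of a path from its list of non-initial vertices. -/
def reconW {N : ℕ} (v : Fin N) (k : ℕ) (a : Fin k → Fin N) : ℕ → Fin N :=
  fun l => if hl : 1 ≤ l ∧ l ≤ k then a ⟨l - 1, by omega⟩ else v

lemma reconW_agree {N : ℕ} (v : Fin N) (k : ℕ) (w : ℕ → Fin N) (hv : w 0 = v) :
    ∀ l ≤ k, reconW v k (fun i => w ((i : ℕ) + 1)) l = w l := by
  intro l hl
  unfold reconW
  by_cases h0 : 1 ≤ l ∧ l ≤ k
  · rw [dif_pos h0]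
    show w (l - 1 + 1) = w l
    congr 1
    omega
  · rw [dif_neg h0]
    have : l = 0 := by omega
    rw [this, hv]

/-- Reconstruction of a lasso. -/
def reconL {N : ℕ} (v : Fin N) (k t : ℕ) (a : Fin (k - 1) → Fin N) : ℕ → Fin N :=
  fun l => if l = k then reconW v (k - 1) a t else reconW v (k - 1) a l

/-- Reconstruction of the second path of a theta. -/
def reconG {N : ℕ} (v : Fin N) (k1 : ℕ) (a : Fin k1 → Fin N) (k2 t : ℕ)
    (b : Fin (k2 - t - 1) → Fin N) : ℕ → Fin N :=
  fun l => if l ≤ t then reconW v k1 a l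
    else if l = k2 then reconW v k1 a k1
    else if hl : t + 1 ≤ l ∧ l ≤ k2 - 1 then b ⟨l - t - 1, by omega⟩ else v

lemma measure_bad_le {N d : ℕ} (hd : d ≤ N) (hd1 : 1 ≤ d) (hN : 0 < N)
    (v : Fin N) (h : ℕ) :
    graphMeasure N d {g | ¬ TreeUpTo (fun u w => w ∈ g u) v h}
      ≤ (((h + 1) ^ 2 + (h + 1) ^ 3 : ℕ) : ENNReal) * ((d : ENNReal) ^ (2 * h + 1) / N) := by
  classical
  set μ := graphMeasure N d with hμ
  set Lset : ∀ (k t : ℕ), (Fin (k - 1) → Fin N) → Set (Fin N → Finset (Fin N)) :=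
    fun k t a =>
      if t < k ∧ (∀ i j, i < k → j < k → reconL v k t a i = reconL v k t a j → i = j)
      then {g | ∀ j < k, reconL v k t a (j + 1) ∈ g (reconL v k t a j)}
      else ∅ with hLset
  set Gset : ∀ (k1 k2 t : ℕ), (Fin k1 → Fin N) → (Fin (k2 - t - 1) → Fin N) →
      Set (Fin N → Finset (Fin N)) :=
    fun k1 k2 t a b =>
      if t < k1 ∧ t < k2
        ∧ (∀ i j, i < k1 → j < k1 → reconW v k1 a i = reconW v k1 a j → i = j)
        ∧ (∀ i j, t ≤ i → i < k2 → t ≤ j → j < k2 →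
            reconG v k1 a k2 t b i = reconG v k1 a k2 t b j → i = j)
        ∧ (∀ i j, i < k1 → t ≤ j → j < k2 →
            reconW v k1 a i = reconG v k1 a k2 t b j → i = t ∧ j = t)
        ∧ reconW v k1 a (t + 1) ≠ reconG v k1 a k2 t b (t + 1)
      then {g | (∀ j < k1, reconW v k1 a (j + 1) ∈ g (reconW v k1 a j)) ∧
            (∀ j < k2, reconG v k1 a k2 t b (j + 1) ∈ g (reconG v k1 a k2 t b j))}
      else ∅ with hGset
  set U1 : Set (Fin N → Finset (Fin N)) :=
    ⋃ (k : Fin (h + 1)) (t : Fin (h + 1)) (a : Fin ((k : ℕ) - 1) → Fin N),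
      Lset k t a with hU1
  set U2 : Set (Fin N → Finset (Fin N)) :=
    ⋃ (k1 : Fin (h + 1)) (k2 : Fin (h + 1)) (t : Fin (h + 1))
      (a : Fin (k1 : ℕ) → Fin N) (b : Fin ((k2 : ℕ) - (t : ℕ) - 1) → Fin N),
      Gset k1 k2 t a b with hU2
  -- coverage
  have cover : {g | ¬ TreeUpTo (fun u w => w ∈ g u) v h} ⊆ U1 ∪ U2 := by
    intro g hg
    rw [Set.mem_setOf_eq, not_treeUpTo_iff] at hg
    rcases wit_to_structure _ v h hg with hlasso | htheta
    · obtain ⟨k, t, w, hk, htk, hv0, hpath, hret, hinj⟩ := hlasso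
      left
      rw [hU1]
      refine Set.mem_iUnion.mpr ⟨⟨k, by omega⟩, Set.mem_iUnion.mpr ⟨⟨t, by omega⟩,
        Set.mem_iUnion.mpr ⟨fun i => w ((i : ℕ) + 1), ?_⟩⟩⟩
      have hagW : ∀ l, l ≤ k - 1 → reconW v (k - 1) (fun i => w ((i : ℕ) + 1)) l = w l :=
        fun l hl => reconW_agree v (k - 1) w hv0 l hl
      have hag : ∀ l, l ≤ k → reconL v k t (fun i => w ((i : ℕ) + 1)) l = w l := by
        intro l hl
        unfold reconL
        by_cases hlk : l = k
        · rw [if_pos hlk, hagW t (by omega), hlk, hret]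
        · rw [if_neg hlk, hagW l (by omega)]
      rw [hLset]
      simp only []
      rw [if_pos ?gate]
      case gate =>
        refine ⟨htk, fun i j hi hj heq => ?_⟩
        rw [hag i (by omega), hag j (by omega)] at heq
        exact hinj i j hi hj heq
      intro j hj
      rw [hag (j + 1) (by omega), hag j (by omega)]
      exact hpath j hj
    · obtain ⟨k1, k2, t, w1, w2, hk1, hk2, ht1, ht2, hv1, hp1, hp2, hpre, hend,
        hinj1, hinj2, hcross, hstep⟩ := htheta
      right
      rw [hU2]
      have hv2 : w2 0 = v := by rw [← hpre 0 (Nat.zero_le t), hv1]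
      refine Set.mem_iUnion.mpr ⟨⟨k1, by omega⟩, Set.mem_iUnion.mpr ⟨⟨k2, by omega⟩,
        Set.mem_iUnion.mpr ⟨⟨t, by omega⟩, Set.mem_iUnion.mpr ⟨fun i => w1 ((i : ℕ) + 1),
        Set.mem_iUnion.mpr ⟨fun i => w2 (t + 1 + (i : ℕ)), ?_⟩⟩⟩⟩⟩
      set a : Fin k1 → Fin N := fun i => w1 ((i : ℕ) + 1) with ha
      set b : Fin (k2 - t - 1) → Fin N := fun i => w2 (t + 1 + (i : ℕ)) with hb
      have hag1 : ∀ l, l ≤ k1 → reconW v k1 a l = w1 l :=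
        fun l hl => reconW_agree v k1 w1 hv1 l hl
      have hag2 : ∀ l, l ≤ k2 → reconG v k1 a k2 t b l = w2 l := by
        intro l hl
        unfold reconG
        by_cases hlt : l ≤ t
        · rw [if_pos hlt, hag1 l (by omega)]
          exact hpre l hlt
        · rw [if_neg hlt]
          by_cases hlk : l = k2
          · rw [if_pos hlk, hag1 k1 le_rfl, hlk]
            exact hend
          · rw [if_neg hlk, dif_pos (⟨by omega, by omega⟩ : t + 1 ≤ l ∧ l ≤ k2 - 1)]
            show w2 (t + 1 + (l - t - 1)) = w2 l
            congr 1
            omega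
      rw [hGset]
      simp only []
      rw [if_pos ?gate2]
      case gate2 =>
        refine ⟨ht1, ht2, ?_, ?_, ?_, ?_⟩
        · intro i j hi hj heq
          rw [hag1 i (by omega), hag1 j (by omega)] at heq
          exact hinj1 i j hi hj heq
        · intro i j hti hi htj hj heq
          rw [hag2 i (by omega), hag2 j (by omega)] at heq
          exact hinj2 i j hi hj heq
        · intro i j hi htj hj heq
          rw [hag1 i (by omega), hag2 j (by omega)] at heq
          exact hcross i j hi htj hj heq
        · rw [hag1 (t + 1) (by omega), hag2 (t + 1) (by omega)]
          exact hstep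
      constructor
      · intro j hj
        rw [hag1 (j + 1) (by omega), hag1 j (by omega)]
        exact hp1 j hj
      · intro j hj
        rw [hag2 (j + 1) (by omega), hag2 j (by omega)]
        exact hp2 j hj
  -- per-datum bounds
  have Lbound : ∀ (k t : ℕ) (a : Fin (k - 1) → Fin N),
      μ (Lset k t a) ≤ ((d : ENNReal) / N) ^ ((k - 1) + 1) := by
    intro k t a
    rw [hLset]
    simp only []
    split_ifs with hcond
    · obtain ⟨htk, hinj⟩ := hcond
      have hsep : {g : Fin N → Finset (Fin N) |
          ∀ j < k, reconL v k t a (j + 1) ∈ g (reconL v k t a j)}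
          = {g | (∀ j < k, reconL v k t a (j + 1) ∈ g (reconL v k t a j)) ∧
              (∀ j < 0, reconL v k t a (j + 1) ∈ g (reconL v k t a j))} := by
        ext g; simp
      rw [hsep]
      have hb := measure_pathpair_le hd k 0 0 le_rfl (reconL v k t a) (reconL v k t a)
        hinj (fun i j _ hi _ _ _ => absurd hi (Nat.not_lt_zero _))
        (fun i j _ _ hj _ => absurd hj (Nat.not_lt_zero _))
        (fun _ h0 => absurd h0 (Nat.not_lt_zero _))
      have hexp : k + (0 - 0) = (k - 1) + 1 := by omega
      rw [hexp] at hb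
      exact hb
    · simp
  have Gbound : ∀ (k1 k2 t : ℕ) (a : Fin k1 → Fin N) (b : Fin (k2 - t - 1) → Fin N),
      μ (Gset k1 k2 t a b) ≤ ((d : ENNReal) / N) ^ ((k1 + (k2 - t - 1)) + 1) := by
    intro k1 k2 t a b
    rw [hGset]
    simp only []
    split_ifs with hcond
    · obtain ⟨ht1, ht2, g2, g3, g4, g5⟩ := hcond
      have hb := measure_pathpair_le hd k1 k2 t (by omega) (reconW v k1 a)
        (reconG v k1 a k2 t b) g2 g3 g4 (fun _ _ => g5)
      have hexp : k1 + (k2 - t) = (k1 + (k2 - t - 1)) + 1 := by omega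
      rw [hexp] at hb
      exact hb
    · simp
  -- counting
  have hN0 : (N : ENNReal) ≠ 0 := by exact_mod_cast hN.ne'
  have hNt : (N : ENNReal) ≠ ⊤ := ENNReal.natCast_ne_top N
  have count_term : ∀ m : ℕ, m ≤ 2 * h →
      (N : ENNReal) ^ m * ((d : ENNReal) / N) ^ (m + 1)
        ≤ (d : ENNReal) ^ (2 * h + 1) / N := by
    intro m hm
    have heq : (N : ENNReal) ^ m * ((d : ENNReal) / N) ^ (m + 1)
        = (d : ENNReal) ^ (m + 1) / N := by
      rw [div_eq_mul_inv, mul_pow, ← ENNReal.inv_pow, pow_succ (N : ENNReal) m,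
        ENNReal.mul_inv (Or.inl (pow_ne_zero m hN0)) (Or.inl (ENNReal.pow_ne_top hNt))]
      calc (N : ENNReal) ^ m * ((d : ENNReal) ^ (m + 1) * (((N : ENNReal) ^ m)⁻¹ * ((N : ENNReal))⁻¹))
          = (d : ENNReal) ^ (m + 1) * (((N : ENNReal) ^ m * ((N : ENNReal) ^ m)⁻¹) * ((N : ENNReal))⁻¹) := by
            ring
        _ = (d : ENNReal) ^ (m + 1) * ((N : ENNReal))⁻¹ := by
            rw [ENNReal.mul_inv_cancel (pow_ne_zero m hN0) (ENNReal.pow_ne_top hNt), one_mul]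
        _ = (d : ENNReal) ^ (m + 1) / N := by rw [div_eq_mul_inv]
    rw [heq, div_eq_mul_inv, div_eq_mul_inv]
    exact mul_le_mul_left (pow_le_pow_right₀ (by exact_mod_cast hd1) (by omega)) _
  -- summing U1
  have hU1sum : μ U1 ≤ (((h + 1) ^ 2 : ℕ) : ENNReal) * ((d : ENNReal) ^ (2 * h + 1) / N) := by
    rw [hU1]
    refine le_trans (measure_iUnion_fintype_le _ _) ?_
    have step1 : ∀ k : Fin (h + 1),
        μ (⋃ (t : Fin (h + 1)) (a : Fin ((k : ℕ) - 1) → Fin N), Lset k t a)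
          ≤ ∑ t : Fin (h + 1), ∑ a : Fin ((k : ℕ) - 1) → Fin N, μ (Lset k t a) := by
      intro k
      refine le_trans (measure_iUnion_fintype_le _ _) (Finset.sum_le_sum fun t _ => ?_)
      exact measure_iUnion_fintype_le _ _
    refine le_trans (Finset.sum_le_sum fun k _ => step1 k) ?_
    have step2 : ∀ k t : Fin (h + 1),
        ∑ a : Fin ((k : ℕ) - 1) → Fin N, μ (Lset k t a)
          ≤ (d : ENNReal) ^ (2 * h + 1) / N := by
      intro k t
      calc ∑ a : Fin ((k : ℕ) - 1) → Fin N, μ (Lset k t a)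
          ≤ ∑ _a : Fin ((k : ℕ) - 1) → Fin N,
              ((d : ENNReal) / N) ^ (((k : ℕ) - 1) + 1) :=
            Finset.sum_le_sum fun a _ => Lbound k t a
        _ = (Fintype.card (Fin ((k : ℕ) - 1) → Fin N) : ℕ)
              • ((d : ENNReal) / N) ^ (((k : ℕ) - 1) + 1) := by
            rw [Finset.sum_const, Finset.card_univ]
        _ = (N : ENNReal) ^ ((k : ℕ) - 1) * ((d : ENNReal) / N) ^ (((k : ℕ) - 1) + 1) := by
            rw [Fintype.card_fun, Fintype.card_fin, Fintype.card_fin, nsmul_eq_mul]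
            push_cast
            ring
        _ ≤ (d : ENNReal) ^ (2 * h + 1) / N := count_term _ (by omega)
    refine le_trans (Finset.sum_le_sum fun k _ => Finset.sum_le_sum fun t _ => step2 k t) ?_
    rw [Finset.sum_const, Finset.sum_const, Finset.card_univ, Fintype.card_fin,
      nsmul_eq_mul, nsmul_eq_mul]
    rw [← mul_assoc]
    push_cast
    ring_nf
    exact le_rfl
  -- summing U2
  have hU2sum : μ U2 ≤ (((h + 1) ^ 3 : ℕ) : ENNReal) * ((d : ENNReal) ^ (2 * h + 1) / N) := by
    rw [hU2]
    have step1 : μ (⋃ (k1 : Fin (h + 1)) (k2 : Fin (h + 1)) (t : Fin (h + 1))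
        (a : Fin (k1 : ℕ) → Fin N) (b : Fin ((k2 : ℕ) - (t : ℕ) - 1) → Fin N),
        Gset k1 k2 t a b)
        ≤ ∑ k1 : Fin (h + 1), ∑ k2 : Fin (h + 1), ∑ t : Fin (h + 1),
            ∑ a : Fin (k1 : ℕ) → Fin N, ∑ b : Fin ((k2 : ℕ) - (t : ℕ) - 1) → Fin N,
              μ (Gset k1 k2 t a b) := by
      refine le_trans (measure_iUnion_fintype_le _ _) (Finset.sum_le_sum fun k1 _ => ?_)
      refine le_trans (measure_iUnion_fintype_le _ _) (Finset.sum_le_sum fun k2 _ => ?_)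
      refine le_trans (measure_iUnion_fintype_le _ _) (Finset.sum_le_sum fun t _ => ?_)
      refine le_trans (measure_iUnion_fintype_le _ _) (Finset.sum_le_sum fun a _ => ?_)
      exact measure_iUnion_fintype_le _ _
    refine le_trans step1 ?_
    have step2 : ∀ (k1 k2 t : Fin (h + 1)),
        ∑ a : Fin (k1 : ℕ) → Fin N, ∑ b : Fin ((k2 : ℕ) - (t : ℕ) - 1) → Fin N,
            μ (Gset k1 k2 t a b)
          ≤ (d : ENNReal) ^ (2 * h + 1) / N := by
      intro k1 k2 t
      calc ∑ a : Fin (k1 : ℕ) → Fin N, ∑ b : Fin ((k2 : ℕ) - (t : ℕ) - 1) → Fin N,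
            μ (Gset k1 k2 t a b)
          ≤ ∑ _a : Fin (k1 : ℕ) → Fin N, ∑ _b : Fin ((k2 : ℕ) - (t : ℕ) - 1) → Fin N,
            ((d : ENNReal) / N) ^ (((k1 : ℕ) + ((k2 : ℕ) - (t : ℕ) - 1)) + 1) :=
            Finset.sum_le_sum fun a _ => Finset.sum_le_sum fun b _ => Gbound k1 k2 t a b
        _ = (N : ENNReal) ^ ((k1 : ℕ) + ((k2 : ℕ) - (t : ℕ) - 1))
              * ((d : ENNReal) / N) ^ (((k1 : ℕ) + ((k2 : ℕ) - (t : ℕ) - 1)) + 1) := by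
            rw [Finset.sum_const, Finset.sum_const, Finset.card_univ, Finset.card_univ,
              Fintype.card_fun, Fintype.card_fun, Fintype.card_fin, Fintype.card_fin,
              Fintype.card_fin, smul_smul, nsmul_eq_mul]
            push_cast
            rw [pow_add]
            ring
        _ ≤ (d : ENNReal) ^ (2 * h + 1) / N := count_term _ (by omega)
    refine le_trans (Finset.sum_le_sum fun k1 _ => Finset.sum_le_sum fun k2 _ =>
      Finset.sum_le_sum fun t _ => step2 k1 k2 t) ?_
    rw [Finset.sum_const, Finset.sum_const, Finset.sum_const, Finset.card_univ,
      Fintype.card_fin, nsmul_eq_mul, nsmul_eq_mul, nsmul_eq_mul]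
    rw [← mul_assoc, ← mul_assoc]
    push_cast
    ring_nf
    exact le_rfl
  calc μ {g | ¬ TreeUpTo (fun u w => w ∈ g u) v h}
      ≤ μ (U1 ∪ U2) := measure_mono cover
    _ ≤ μ U1 + μ U2 := measure_union_le _ _
    _ ≤ (((h + 1) ^ 2 : ℕ) : ENNReal) * ((d : ENNReal) ^ (2 * h + 1) / N)
        + (((h + 1) ^ 3 : ℕ) : ENNReal) * ((d : ENNReal) ^ (2 * h + 1) / N) :=
        add_le_add hU1sum hU2sum
    _ = (((h + 1) ^ 2 + (h + 1) ^ 3 : ℕ) : ENNReal) * ((d : ENNReal) ^ (2 * h + 1) / N) := by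
        push_cast
        ring

lemma graphMeasure_isProb {N d : ℕ} (hd : d ≤ N) :
    IsProbabilityMeasure (graphMeasure N d) := by
  have hne : (Finset.powersetCard d (Finset.univ : Finset (Fin N))).Nonempty := by
    obtain ⟨t, hts, htc⟩ := Finset.exists_subset_card_eq (s := (Finset.univ : Finset (Fin N))) (n := d)
      (by simpa using hd)
    exact ⟨t, Finset.mem_powersetCard.mpr ⟨hts, htc⟩⟩
  haveI : ∀ _i : Fin N, IsProbabilityMeasure
      (uniformFinset (Finset.powersetCard d (Finset.univ : Finset (Fin N)))) :=
    fun _ => ⟨uniformFinset_univ _ hne⟩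
  unfold graphMeasure
  infer_instance

lemma natBound (x d : ℕ) (hd1 : 1 ≤ d) :
    ((x + 1) ^ 2 + (x + 1) ^ 3) * d ^ (2 * x + 1) ≤ 16 * d * (8 * d ^ 2) ^ x := by
  have h1 : (x + 1) ^ 2 + (x + 1) ^ 3 ≤ 2 * (x + 1) ^ 3 := by
    have : (x + 1) ^ 2 ≤ (x + 1) ^ 3 := Nat.pow_le_pow_right (by omega) (by omega)
    omega
  have h2 : (x + 1) ^ 3 ≤ 8 ^ (x + 1) := by
    calc (x + 1) ^ 3 ≤ (2 ^ (x + 1)) ^ 3 :=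
          Nat.pow_le_pow_left (le_of_lt (Nat.lt_two_pow_self (n := x + 1))) 3
      _ = 8 ^ (x + 1) := by
          rw [← pow_mul, mul_comm (x + 1) 3, pow_mul]
          norm_num
  calc ((x + 1) ^ 2 + (x + 1) ^ 3) * d ^ (2 * x + 1)
      ≤ (2 * (x + 1) ^ 3) * d ^ (2 * x + 1) := Nat.mul_le_mul_right _ h1
    _ ≤ (2 * 8 ^ (x + 1)) * d ^ (2 * x + 1) :=
        Nat.mul_le_mul_right _ (Nat.mul_le_mul_left _ h2)
    _ = 16 * d * (8 * d ^ 2) ^ x := by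
        rw [pow_succ 8 x, pow_succ d (2 * x), pow_mul d 2 x, mul_pow 8 (d ^ 2) x]
        ring

lemma tendsto_aux (C : ℝ) (hC : 1 ≤ C) (f : ℕ → ℕ)
    (hf : Tendsto (fun n : ℕ => (f n : ℝ) / Real.log n) atTop (nhds 0)) :
    Tendsto (fun n : ℕ => C ^ (f n) / (n : ℝ)) atTop (nhds 0) := by
  have hCpos : (0 : ℝ) < C := lt_of_lt_of_le one_pos hC
  have hlog : Tendsto (fun n : ℕ => Real.log n) atTop atTop :=
    Real.tendsto_log_atTop.comp tendsto_natCast_atTop_atTop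
  have hfac : Tendsto (fun n : ℕ => (f n : ℝ) / Real.log n * Real.log C - 1) atTop
      (nhds (0 * Real.log C - 1)) := (hf.mul_const _).sub_const 1
  have hneg : (0 * Real.log C - 1 : ℝ) < 0 := by norm_num
  have hbot : Tendsto
      (fun n : ℕ => Real.log n * ((f n : ℝ) / Real.log n * Real.log C - 1)) atTop atBot :=
    Filter.Tendsto.atTop_mul_neg hneg hlog hfac
  have hexp : Tendsto
      (fun n : ℕ => Real.exp (Real.log n * ((f n : ℝ) / Real.log n * Real.log C - 1)))
      atTop (nhds 0) := Real.tendsto_exp_atBot.comp hbot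
  refine Filter.Tendsto.congr' ?_ hexp
  filter_upwards [Filter.eventually_ge_atTop 2] with n hn
  have hn1 : (1 : ℝ) < (n : ℝ) := by exact_mod_cast Nat.lt_of_lt_of_le one_lt_two hn
  have hlogpos : 0 < Real.log n := Real.log_pos hn1
  have hcalc : Real.log n * ((f n : ℝ) / Real.log n * Real.log C - 1)
      = (f n : ℝ) * Real.log C - Real.log n := by
    field_simp
  rw [hcalc, Real.exp_sub, Real.exp_log (by positivity : (0 : ℝ) < (n : ℝ))]
  congr 1
  rw [Real.exp_nat_mul, Real.exp_log hCpos]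


/-- **local tree-likeness.** Fix `d ≥ 1` and a sequence `(h n)`
with `h n / ln n → 0`. Sample the random graph of `G(n, d)` (node set
`Fin (n+1)`, so that the node `v = 0` exists) and fix `v = 0`. Then the
probability that the out-neighborhood of `v` up to distance `h n` is a tree
tends to `1` as the number of nodes tends to infinity. -/
theorem locally_tree_like (d : ℕ) (hd : 1 ≤ d) (h : ℕ → ℕ)
    (hh : Filter.Tendsto (fun n : ℕ => (h n : ℝ) / Real.log n)
      Filter.atTop (nhds 0)) :
    Filter.Tendsto
      (fun n : ℕ => graphMeasure (n + 1) d
        {g : Fin (n + 1) → Finset (Fin (n + 1)) |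
          TreeUpTo (fun u w => w ∈ g u) 0 (h (n + 1))})
      Filter.atTop (nhds 1) := by
  classical
  set K : ℕ → ℕ := fun n => 16 * d * (8 * d ^ 2) ^ (h (n + 1)) with hK
  -- the bad-event measures tend to zero
  have hbad : Tendsto (fun n : ℕ => graphMeasure (n + 1) d
      {g : Fin (n + 1) → Finset (Fin (n + 1)) |
        ¬ TreeUpTo (fun u w => w ∈ g u) 0 (h (n + 1))}) atTop (nhds 0) := by
    have hub : ∀ᶠ n in atTop, graphMeasure (n + 1) d
        {g : Fin (n + 1) → Finset (Fin (n + 1)) |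
          ¬ TreeUpTo (fun u w => w ∈ g u) 0 (h (n + 1))}
        ≤ (K n : ENNReal) / ((n + 1 : ℕ) : ENNReal) := by
      filter_upwards [Filter.eventually_ge_atTop d] with n hn
      have hdn : d ≤ n + 1 := by omega
      refine le_trans (measure_bad_le hdn hd (by omega) 0 (h (n + 1))) ?_
      set H := h (n + 1) with hH
      have hrw : (((H + 1) ^ 2 + (H + 1) ^ 3 : ℕ) : ENNReal)
          * ((d : ENNReal) ^ (2 * H + 1) / ((n + 1 : ℕ) : ENNReal))
          = ((((H + 1) ^ 2 + (H + 1) ^ 3) * d ^ (2 * H + 1) : ℕ) : ENNReal)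
            / ((n + 1 : ℕ) : ENNReal) := by
        rw [← mul_div_assoc]
        congr 1
        push_cast
        ring
      rw [hrw]
      have hnat : ((H + 1) ^ 2 + (H + 1) ^ 3) * d ^ (2 * H + 1) ≤ K n := by
        rw [hK]
        exact natBound H d hd
      exact ENNReal.div_le_div (by exact_mod_cast hnat) le_rfl
    have htend : Tendsto (fun n : ℕ => (K n : ENNReal) / ((n + 1 : ℕ) : ENNReal))
        atTop (nhds 0) := by
      have hofreal : ∀ n : ℕ, (K n : ENNReal) / ((n + 1 : ℕ) : ENNReal)
          = ENNReal.ofReal ((K n : ℝ) / ((n + 1 : ℕ) : ℝ)) := by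
        intro n
        rw [ENNReal.ofReal_div_of_pos (by positivity), ENNReal.ofReal_natCast,
          ENNReal.ofReal_natCast]
      have hreal : Tendsto (fun n : ℕ => (K n : ℝ) / ((n + 1 : ℕ) : ℝ)) atTop (nhds 0) := by
        have hC : (1 : ℝ) ≤ 8 * (d : ℝ) ^ 2 := by
          have : (1 : ℝ) ≤ (d : ℝ) := by exact_mod_cast hd
          nlinarith
        have base := tendsto_aux (8 * (d : ℝ) ^ 2) hC h hh
        have shifted : Tendsto
            (fun n : ℕ => (8 * (d : ℝ) ^ 2) ^ (h (n + 1)) / ((n + 1 : ℕ) : ℝ))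
            atTop (nhds 0) := base.comp (tendsto_add_atTop_nat 1)
        have hmul := shifted.const_mul (16 * (d : ℝ))
        rw [mul_zero] at hmul
        refine hmul.congr fun n => ?_
        rw [hK]
        push_cast
        ring
      rw [funext hofreal]
      simpa using ENNReal.tendsto_ofReal hreal
    refine tendsto_of_tendsto_of_tendsto_of_le_of_le' tendsto_const_nhds htend
      (Filter.Eventually.of_forall fun n => zero_le) hub
  -- conclude
  have hprob : (fun n : ℕ => graphMeasure (n + 1) d
      {g : Fin (n + 1) → Finset (Fin (n + 1)) |
        TreeUpTo (fun u w => w ∈ g u) 0 (h (n + 1))}) =ᶠ[atTop]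
      (fun n : ℕ => 1 - graphMeasure (n + 1) d
      {g : Fin (n + 1) → Finset (Fin (n + 1)) |
        ¬ TreeUpTo (fun u w => w ∈ g u) 0 (h (n + 1))}) := by
    filter_upwards [Filter.eventually_ge_atTop d] with n hn
    haveI := graphMeasure_isProb (N := n + 1) (d := d) (by omega)
    have hcompl : {g : Fin (n + 1) → Finset (Fin (n + 1)) |
        TreeUpTo (fun u w => w ∈ g u) 0 (h (n + 1))}
        = {g : Fin (n + 1) → Finset (Fin (n + 1)) |
        ¬ TreeUpTo (fun u w => w ∈ g u) 0 (h (n + 1))}ᶜ := by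
      ext g
      simp
    rw [hcompl, prob_compl_eq_one_sub (measurableSet_all _)]
  have hone : Tendsto (fun n : ℕ => 1 - graphMeasure (n + 1) d
      {g : Fin (n + 1) → Finset (Fin (n + 1)) |
        ¬ TreeUpTo (fun u w => w ∈ g u) 0 (h (n + 1))}) atTop (nhds 1) := by
    have := ENNReal.Tendsto.sub (tendsto_const_nhds (x := (1 : ENNReal)) (f := atTop))
      hbad (Or.inl ENNReal.one_ne_top)
    simpa using this
  exact Filter.Tendsto.congr' hprob.symm hone

end Auxiliary
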